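/- arXiv:2201.01013 — 3 statements merged into one kernel-verified Lean document; each statement's English description precedes it below -/
import Mathlib

section
/- If there exists t such that every (m+1)-definable set of an information system is a union of at most t m-definable sets, then for every n ≥ 1, every n-definable set is a union of at most t^n m-definable sets. -/
/-- `B` is an `m`-definable set of the information system with universe `A`
and attribute set `F`: a nonempty solution set of a system of `m` equations `f i x = δ i`
with attributes from `F` (not necessarily distinct). -/
def Definable {A : Type*} (F : Set (A → Bool)) (m : ℕ) (B : Set A) : Prop :=
  B.Nonempty ∧ ∃ f : Fin m → A → Bool, ∃ δ : Fin m → Bool,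
    (∀ i, f i ∈ F) ∧ B = {a | ∀ i, f i a = δ i}

/-- `B` is a union of at most `t` `m`-definable sets. -/
def UnionOfAtMost {A : Type*} (F : Set (A → Bool)) (m t : ℕ) (B : Set A) : Prop :=
  ∃ k : ℕ, k ≤ t ∧ ∃ D : Fin k → Set A, (∀ i, Definable F m (D i)) ∧ B = ⋃ i, D i

lemma definable_pad {A : Type*} {F : Set (A → Bool)} {n k : ℕ} (hn : 1 ≤ n) (hk : n ≤ k)
    {B : Set A} (hB : Definable F n B) : Definable F k B := by
  obtain ⟨hne, f, δ, hf, hBeq⟩ := hB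
  refine ⟨hne, fun i => if h : (i : ℕ) < n then f ⟨i, h⟩ else f ⟨0, hn⟩,
    fun i => if h : (i : ℕ) < n then δ ⟨i, h⟩ else δ ⟨0, hn⟩, ?_, ?_⟩
  · intro i; dsimp only; split <;> apply hf
  · rw [hBeq]; ext a; simp only [Set.mem_setOf_eq]
    constructor
    · intro ha i
      split
      · exact ha _
      · exact ha _
    · intro ha i
      have := ha ⟨i, lt_of_lt_of_le i.2 hk⟩
      simpa [i.2] using this

lemma t_pos {A : Type*} {F : Set (A → Bool)} {m t : ℕ}
    (h : ∀ B : Set A, Definable F (m + 1) B → UnionOfAtMost F m t B)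
    {n : ℕ} (hn : 1 ≤ n) {B : Set A} (hB : Definable F n B) : 1 ≤ t := by
  obtain ⟨⟨a, ha⟩, f, δ, hf, hBeq⟩ := hB
  set g := f ⟨0, hn⟩ with hg
  have hC : Definable F (m + 1) {x | ∀ _ : Fin (m + 1), g x = g a} :=
    ⟨⟨a, fun _ => rfl⟩, fun _ => g, fun _ => g a, fun _ => hf _, rfl⟩
  obtain ⟨k, hk, D, _, hD⟩ := h _ hC
  have : (a : A) ∈ ⋃ i, D i := by rw [← hD]; exact fun _ => rfl
  obtain ⟨_, ⟨i, rfl⟩, _⟩ := this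
  exact le_trans i.pos hk

lemma unionOfAtMost_mono {A : Type*} {F : Set (A → Bool)} {m t t' : ℕ} {B : Set A}
    (h : UnionOfAtMost F m t B) (htt : t ≤ t') : UnionOfAtMost F m t' B := by
  obtain ⟨k, hk, D, hD, hB⟩ := h
  exact ⟨k, hk.trans htt, D, hD, hB⟩

lemma unionOfAtMost_concat {A : Type*} {F : Set (A → Bool)} {m t k : ℕ}
    {C : Fin k → Set A} (hC : ∀ j, UnionOfAtMost F m t (C j)) :
    UnionOfAtMost F m (k * t) (⋃ j, C j) := by
  choose kj hkj D hD hCeq using hC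
  let e := Fintype.equivFin (Σ j : Fin k, Fin (kj j))
  refine ⟨Fintype.card (Σ j : Fin k, Fin (kj j)), ?_, fun i => D (e.symm i).1 (e.symm i).2,
    fun i => hD _ _, ?_⟩
  · rw [Fintype.card_sigma]
    calc ∑ j : Fin k, Fintype.card (Fin (kj j)) ≤ ∑ _j : Fin k, t := by
          apply Finset.sum_le_sum; intro j _; simpa using hkj j
      _ = k * t := by simp [Finset.sum_const, Finset.card_univ]
  · have : ⋃ i, D (e.symm i).1 (e.symm i).2 = ⋃ s : Σ j : Fin k, Fin (kj j), D s.1 s.2 := by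
      apply Set.eq_of_subset_of_subset
      · exact Set.iUnion_subset fun i => Set.subset_iUnion
          (fun s : Σ j : Fin k, Fin (kj j) => D s.1 s.2) (e.symm i)
      · refine Set.iUnion_subset fun s => ?_
        have : D s.1 s.2 = D (e.symm (e s)).1 (e.symm (e s)).2 := by rw [Equiv.symm_apply_apply]
        rw [this]
        exact Set.subset_iUnion (fun i => D (e.symm i).1 (e.symm i).2) (e s)
    rw [this, Set.iUnion_sigma]
    exact Set.iUnion_congr fun j => hCeq j

lemma inter_step {A : Type*} {F : Set (A → Bool)} {m t : ℕ}
    (h : ∀ B : Set A, Definable F (m + 1) B → UnionOfAtMost F m t B)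
    {D : Set A} (hD : Definable F m D) {g : A → Bool} (hg : g ∈ F) (b : Bool) :
    UnionOfAtMost F m t (D ∩ {x | g x = b}) := by
  rcases Set.eq_empty_or_nonempty (D ∩ {x | g x = b}) with he | hne
  · exact ⟨0, Nat.zero_le t, fun i => i.elim0, fun i => i.elim0, by simp [he]⟩
  · apply h
    obtain ⟨_, f, δ, hf, hDeq⟩ := hD
    refine ⟨hne, Fin.snoc f g, Fin.snoc δ b, ?_, ?_⟩
    · intro i
      refine Fin.lastCases ?_ ?_ i
      · simpa using hg
      · intro j; simpa using hf j
    · rw [hDeq]; ext a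
      simp only [Set.mem_inter_iff, Set.mem_setOf_eq]
      constructor
      · rintro ⟨h1, h2⟩ i
        refine Fin.lastCases ?_ ?_ i
        · simpa using h2
        · intro j; simpa using h1 j
      · intro ha
        refine ⟨fun j => by simpa using ha j.castSucc, by simpa using ha (Fin.last m)⟩

theorem stmt_3 {A : Type*} (F : Set (A → Bool)) (m t : ℕ) (hm : 1 ≤ m)
    (h : ∀ B : Set A, Definable F (m + 1) B → UnionOfAtMost F m t B) :
    ∀ n : ℕ, 1 ≤ n → ∀ B : Set A, Definable F n B → UnionOfAtMost F m (t ^ n) B := by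
  intro n hn
  induction n, hn using Nat.le_induction with
  | base =>
    intro B hB
    have ht : 1 ≤ t := t_pos h (le_refl 1) hB
    refine ⟨1, by simpa using ht, fun _ => B, fun _ => definable_pad (le_refl 1) hm hB, by simp [Set.iUnion_const]⟩
  | succ n hn ih =>
    intro B hB
    obtain ⟨hne, f, δ, hf, hBeq⟩ := hB
    set B₀ : Set A := {a | ∀ i : Fin n, f i.castSucc a = δ i.castSucc} with hB₀
    have hBsub : B ⊆ B₀ := by
      rw [hBeq]; intro a ha i; exact ha i.castSucc
    have hB₀def : Definable F n B₀ :=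
      ⟨hne.mono hBsub, fun i => f i.castSucc, fun i => δ i.castSucc, fun i => hf _, rfl⟩
    obtain ⟨k, hk, D, hD, hDeq⟩ := ih _ hB₀def
    have hBeq2 : B = ⋃ j, (D j ∩ {x | f (Fin.last n) x = δ (Fin.last n)}) := by
      rw [← Set.iUnion_inter, ← hDeq, hB₀]
      rw [hBeq]; ext a
      simp only [Set.mem_inter_iff, Set.mem_setOf_eq]
      constructor
      · intro ha; exact ⟨fun i => ha i.castSucc, ha (Fin.last n)⟩
      · rintro ⟨h1, h2⟩ i
        refine Fin.lastCases h2 h1 i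
    have := unionOfAtMost_concat (fun j => inter_step h (hD j) (hf (Fin.last n)) (δ (Fin.last n)))
    rw [← hBeq2] at this
    refine unionOfAtMost_mono this ?_
    calc k * t ≤ t ^ n * t := Nat.mul_le_mul_right t hk
      _ = t ^ (n + 1) := (pow_succ t n).symm
end

section
/- The information system with universe ℕ and attribute set {p_i : i ∈ ℕ} (p_i(j)=1 iff j=i) does not satisfy the condition of coverage: for every m ∈ ℕ there exists an (m+1)-definable set that is not a finite union of m-definable sets. -/
/-- The attribute `p i` on the universe `ℕ`: `p i j = 1` iff `j = i`. -/
def p (i j : ℕ) : Bool := decide (j = i)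

/-- `B` is a union of a finite number of `m`-definable sets. -/
def FiniteUnionOf {A : Type*} (F : Set (A → Bool)) (m : ℕ) (B : Set A) : Prop :=
  ∃ k : ℕ, ∃ D : Fin k → Set A, (∀ i, Definable F m (D i)) ∧ B = ⋃ i, D i

theorem stmt_10 (m : ℕ) (hm : 1 ≤ m) :
    ∃ B : Set ℕ, Definable (Set.range p) (m + 1) B ∧ ¬ FiniteUnionOf (Set.range p) m B := by
  refine ⟨Set.Ici (m + 1), ⟨⟨m + 1, Set.mem_Ici.mpr (le_refl _)⟩, fun i => p i, fun _ => false,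
      fun i => ⟨i, rfl⟩, ?_⟩, ?_⟩
  · ext a
    simp only [Set.mem_Ici, Set.mem_setOf_eq, p, decide_eq_false_iff_not]
    constructor
    · intro h i hc
      have := i.isLt
      omega
    · intro h
      by_contra hc
      push_neg at hc
      exact h ⟨a, by omega⟩ rfl
  · rintro ⟨k, D, hD, hB⟩
    have hfin : ∀ i, (D i).Finite := by
      intro i
      obtain ⟨hne, f, δ, hf, hEq⟩ := hD i
      by_cases hδ : ∃ l, δ l = true
      · obtain ⟨l, hl⟩ := hδ
        obtain ⟨c, hc⟩ := hf l
        apply Set.Finite.subset (Set.finite_singleton c)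
        intro a ha
        rw [hEq] at ha
        have h2 := ha l
        rw [← hc, hl] at h2
        simpa [p] using h2
      · exfalso
        push_neg at hδ
        choose g hg using hf
        have hsub : D i ⊆ Set.Ici (m + 1) := hB ▸ Set.subset_iUnion D i
        have hcard : (Finset.image g Finset.univ).card < (Finset.range (m + 1)).card := by
          have h1 : (Finset.image g Finset.univ).card ≤ m := by
            calc (Finset.image g Finset.univ).card ≤ (Finset.univ : Finset (Fin m)).card :=
                  Finset.card_image_le
              _ = m := by simp
          simp only [Finset.card_range]
          omega
        have hex : ∃ a ∈ Finset.range (m + 1), a ∉ Finset.image g Finset.univ := by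
          by_contra hc
          push_neg at hc
          exact absurd (Finset.card_le_card hc) (not_le.mpr hcard)
        obtain ⟨a, ha, hna⟩ := hex
        have haD : a ∈ D i := by
          rw [hEq]
          intro l
          rw [← hg l, show δ l = false by simpa using hδ l]
          simp only [p, decide_eq_false_iff_not]
          intro hc
          exact hna (Finset.mem_image.mpr ⟨l, Finset.mem_univ l, hc.symm⟩)
        have := hsub haD
        simp only [Set.mem_Ici] at this
        simp only [Finset.mem_range] at ha
        omega
    have hBfin : (Set.Ici (m + 1) : Set ℕ).Finite := hB ▸ Set.finite_iUnion hfin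
    exact Set.Ici_infinite _ hBfin
end

section
/- If an information system (A,F) has infinite universe A and attributes {p_i} ∪ {l_{2^i}} over ℕ (p_i(j)=1 iff j=i; l_{2^i}(j)=1 iff j>2^i), then for each m and each t there exist r and an (m+3)-definable set of size 2^r − m + 1 all of whose m-definable subsets are singletons; hence the system does not satisfy the condition of restricted coverage. -/
/-- The attribute `l_{2^i}` on the universe `ℕ`: `l2 i j = 1` iff `j > 2^i`. -/
def l2 (i j : ℕ) : Bool := decide (2 ^ i < j)

/-- The attribute set `F = {p_i : i ∈ ℕ} ∪ {l_{2^i} : i ∈ ℕ}`. -/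
def F : Set (ℕ → Bool) := Set.range p ∪ Set.range l2

lemma defB (m s k : ℕ) (hm : 1 ≤ m) (hms : m ≤ 2 ^ (s+1)) :
    Definable F (m + 1 + k) (Set.Icc (2 ^ (s+1) + m) (2 ^ (s+2))) := by
  have hpow1 : (2:ℕ) ^ (s+1) = 2 * 2 ^ s := by ring
  have hpow2 : (2:ℕ) ^ (s+2) = 4 * 2 ^ s := by ring
  refine ⟨⟨2 ^ (s+1) + m, by simp [Set.mem_Icc]; omega⟩,
    fun i => if i.val = 0 then l2 (s+1) else if i.val < m then p (2 ^ (s+1) + i.val)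
      else if i.val = m then l2 (s+2) else l2 (s+1),
    fun i => decide (i.val = 0 ∨ m < i.val), ?_, ?_⟩
  · intro i
    dsimp only
    split_ifs
    · exact Or.inr ⟨_, rfl⟩
    · exact Or.inl ⟨_, rfl⟩
    · exact Or.inr ⟨_, rfl⟩
    · exact Or.inr ⟨_, rfl⟩
  · ext a
    simp only [Set.mem_Icc, Set.mem_setOf_eq]
    constructor
    · rintro ⟨h1, h2⟩ i
      split_ifs with hi0 him hieq
      · simp only [l2, decide_eq_decide]; omega
      · simp only [p, decide_eq_decide]; omega
      · simp only [l2, decide_eq_decide]; omega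
      · simp only [l2, decide_eq_decide]; omega
    · intro h
      have h0 := h ⟨0, by omega⟩
      have hM := h ⟨m, by omega⟩
      simp only [Fin.val_mk] at h0 hM
      rw [if_pos trivial] at h0
      rw [if_neg (by omega : ¬ (m = 0)), if_neg (lt_irrefl m), if_pos trivial] at hM
      rw [decide_eq_true (Or.inl trivial : (True ∨ m < 0))] at h0
      rw [decide_eq_false (by omega : ¬ (m = 0 ∨ m < m))] at hM
      simp only [l2, decide_eq_true_eq] at h0
      simp only [l2, decide_eq_false_iff_not] at hM
      refine ⟨?_, by omega⟩
      by_contra hlt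
      push_neg at hlt
      have hj := h ⟨a - 2 ^ (s+1), by omega⟩
      simp only [Fin.val_mk] at hj
      rw [if_neg (by omega), if_pos (by omega)] at hj
      rw [decide_eq_false (by omega : ¬ (a - 2 ^ (s+1) = 0 ∨ m < a - 2 ^ (s+1)))] at hj
      simp only [p, decide_eq_false_iff_not] at hj
      omega

lemma p_inj {a b : ℕ} (h : p a = p b) : a = b := by
  have := congrFun h a; simp [p] at this; omega

lemma l2_inj {a b : ℕ} (h : l2 a = l2 b) : a = b := by
  have h1 := congrFun h (2 ^ a + 1)
  have h2 := congrFun h (2 ^ b + 1)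
  simp [l2] at h1 h2
  have : (2:ℕ) ^ a = 2 ^ b := by omega
  exact Nat.pow_right_injective (le_refl 2) this

lemma key (m s : ℕ) (hm : 1 ≤ m) (hms : m < 2 ^ s)
    (C : Set ℕ) (hC : Definable F m C)
    (hsub : C ⊆ Set.Icc (2 ^ (s+1) + m) (2 ^ (s+2))) : ∃ a : ℕ, C = {a} := by
  have hpow1 : (2:ℕ) ^ (s+1) = 2 * 2 ^ s := by ring
  have hpow2 : (2:ℕ) ^ (s+2) = 4 * 2 ^ s := by ring
  have hpow3 : (2:ℕ) ^ (s+3) = 8 * 2 ^ s := by ring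
  obtain ⟨⟨c, hc⟩, f, δ, hF, hCeq⟩ := hC
  have hcB := hsub hc
  rw [Set.mem_Icc] at hcB
  rw [hCeq] at hc
  simp only [Set.mem_setOf_eq] at hc
  by_cases hp : ∃ i a, f i = p a ∧ δ i = true
  · -- a positive point constraint: C is a singleton
    obtain ⟨i, a, hfa, hda⟩ := hp
    have hca : c = a := by
      have := hc i
      rw [hfa, hda] at this
      simpa [p] using this
    refine ⟨a, ?_⟩
    apply Set.eq_singleton_iff_unique_mem.mpr
    constructor
    · rw [hCeq]; exact hca ▸ hc
    · intro x hx
      rw [hCeq] at hx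
      have := hx i
      rw [hfa, hda] at this
      simpa [p] using this
  · push_neg at hp
    -- every p-constraint is negative
    have hp' : ∀ i a, f i = p a → δ i = false := by
      intro i a h
      have := hp i a h
      exact Bool.not_eq_true _ ▸ this
    -- bounds on l2 constraints
    have hT : ∀ i u, f i = l2 u → δ i = true → u ≤ s + 1 := by
      intro i u hfu hdu
      have := hc i
      rw [hfu, hdu] at this
      simp only [l2, decide_eq_true_eq] at this
      by_contra hu
      push_neg at hu
      have : (2:ℕ) ^ (s+2) ≤ 2 ^ u := Nat.pow_le_pow_right (by norm_num) hu
      omega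
    have hFa : ∀ i u, f i = l2 u → δ i = false → s + 2 ≤ u := by
      intro i u hfu hdu
      have := hc i
      rw [hfu, hdu] at this
      simp only [l2, decide_eq_false_iff_not, Nat.not_lt] at this
      by_contra hu
      push_neg at hu
      have : (2:ℕ) ^ u ≤ 2 ^ (s+1) := Nat.pow_le_pow_right (by norm_num) (by omega)
      omega
    -- the exclusion function
    classical
    let g : Fin m → ℕ := fun i => if h : ∃ a, f i = p a then h.choose else 0
    have hg : ∀ i a, f i = p a → a = g i := by
      intro i a ha
      have hex : ∃ b, f i = p b := ⟨a, ha⟩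
      have h2 : f i = p (g i) := by
        simp only [g, dif_pos hex]
        exact hex.choose_spec
      exact p_inj (ha.symm.trans h2)
    -- generic "find a point in P avoiding exclusions" helper
    have findx : ∀ (P : Finset ℕ), m < P.card → ∃ x ∈ P, ∀ i : Fin m, x ≠ g i := by
      intro P hcard
      have hE : (Finset.image g Finset.univ).card ≤ m := by
        calc (Finset.image g Finset.univ).card ≤ (Finset.univ : Finset (Fin m)).card :=
              Finset.card_image_le
          _ = m := by simp
      have : 0 < (P \ Finset.image g Finset.univ).card := by
        have := Finset.card_le_card_sdiff_add_card (s := P) (t := Finset.image g Finset.univ)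
        omega
      obtain ⟨x, hx⟩ := Finset.card_pos.mp this
      rw [Finset.mem_sdiff] at hx
      refine ⟨x, hx.1, fun i hxi => hx.2 ?_⟩
      exact Finset.mem_image.mpr ⟨i, Finset.mem_univ i, hxi.symm⟩
    exfalso
    by_cases hA : ∃ i, f i = l2 (s+1) ∧ δ i = true
    · by_cases hB : ∃ i, f i = l2 (s+2) ∧ δ i = false
      · -- case (i): interval is exactly (2^(s+1), 2^(s+2)]; use removed points
        obtain ⟨i₀, hf0, hd0⟩ := hA
        obtain ⟨i₁, hf1, hd1⟩ := hB
        have hne : i₀ ≠ i₁ := by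
          intro h
          rw [h, hd1] at hd0
          exact Bool.false_ne_true hd0
        have hm2 : 2 ≤ m := by
          have h0 := i₀.isLt
          have h1 := i₁.isLt
          have := Fin.val_ne_of_ne hne
          omega
        -- pool: the m-1 removed points, exclusions: at most m-2
        set P : Finset ℕ := Finset.Icc (2 ^ (s+1) + 1) (2 ^ (s+1) + (m - 1)) with hP
        have hPcard : P.card = m - 1 := by
          rw [hP, Nat.card_Icc]; omega
        set E : Finset ℕ := Finset.image g ((Finset.univ.erase i₀).erase i₁) with hEdef
        have hEcard : E.card ≤ m - 2 := by
          calc E.card ≤ ((Finset.univ.erase i₀).erase i₁).card := Finset.card_image_le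
            _ = m - 2 := by
                rw [Finset.card_erase_of_mem (Finset.mem_erase.mpr ⟨hne.symm, Finset.mem_univ _⟩),
                  Finset.card_erase_of_mem (Finset.mem_univ _)]
                rw [Finset.card_univ, Fintype.card_fin]
                omega
        have : 0 < (P \ E).card := by
          have := Finset.card_le_card_sdiff_add_card (s := P) (t := E)
          omega
        obtain ⟨x, hx⟩ := Finset.card_pos.mp this
        rw [Finset.mem_sdiff] at hx
        have hxP := hx.1
        rw [hP, Finset.mem_Icc] at hxP
        have hxC : x ∈ C := by
          rw [hCeq]
          intro i
          by_cases hi0 : i = i₀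
          · rw [hi0, hf0, hd0]
            simp only [l2, decide_eq_true_eq]
            omega
          · by_cases hi1 : i = i₁
            · rw [hi1, hf1, hd1]
              simp only [l2, decide_eq_false_iff_not, Nat.not_lt]
              omega
            · rcases hF i with ⟨a, ha⟩ | ⟨u, hu⟩
              · -- p-constraint
                rw [← ha, hp' i a ha.symm]
                have hgi : a = g i := hg i a ha.symm
                have hxE : x ≠ g i := by
                  intro hxg
                  exact hx.2 (Finset.mem_image.mpr ⟨i, by
                    simp [Finset.mem_erase, hi0, hi1], hxg.symm⟩)
                simp only [p, decide_eq_false_iff_not]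
                omega
              · rcases (Bool.eq_false_or_eq_true (δ i)).symm with hd | hd
                · have hu2 := hFa i u hu.symm hd
                  rw [← hu, hd]
                  simp only [l2, decide_eq_false_iff_not, Nat.not_lt]
                  have : (2:ℕ) ^ (s+2) ≤ 2 ^ u := Nat.pow_le_pow_right (by norm_num) hu2
                  omega
                · have hu1 := hT i u hu.symm hd
                  rw [← hu, hd]
                  simp only [l2, decide_eq_true_eq]
                  -- u ≤ s+1 so 2^u ≤ 2^(s+1) < x
                  have : (2:ℕ) ^ u ≤ 2 ^ (s+1) := Nat.pow_le_pow_right (by norm_num) hu1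
                  omega
        have := hsub hxC
        rw [Set.mem_Icc] at this
        omega
      · -- case (iii): no upper bound at 2^(s+2); escape above
        push_neg at hB
        obtain ⟨x, hxP, hxg⟩ := findx (Finset.Icc (2 ^ (s+2) + 1) (2 ^ (s+2) + 2 ^ s))
          (by rw [Nat.card_Icc]; omega)
        rw [Finset.mem_Icc] at hxP
        have hxC : x ∈ C := by
          rw [hCeq]
          intro i
          rcases hF i with ⟨a, ha⟩ | ⟨u, hu⟩
          · rw [← ha, hp' i a ha.symm]
            have hgi : a = g i := hg i a ha.symm
            have := hxg i
            simp only [p, decide_eq_false_iff_not]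
            omega
          · rcases (Bool.eq_false_or_eq_true (δ i)).symm with hd | hd
            · have hu2 := hFa i u hu.symm hd
              have hu2' : u ≠ s + 2 := by
                intro h
                exact hB i (by rw [← hu, h]) hd
              rw [← hu, hd]
              simp only [l2, decide_eq_false_iff_not, Nat.not_lt]
              have : (2:ℕ) ^ (s+3) ≤ 2 ^ u := Nat.pow_le_pow_right (by norm_num) (by omega)
              omega
            · have hu1 := hT i u hu.symm hd
              rw [← hu, hd]
              simp only [l2, decide_eq_true_eq]
              have : (2:ℕ) ^ u ≤ 2 ^ (s+1) := Nat.pow_le_pow_right (by norm_num) hu1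
              omega
        have := hsub hxC
        rw [Set.mem_Icc] at this
        omega
    · -- case (ii): no lower bound at 2^(s+1); escape below
      push_neg at hA
      obtain ⟨x, hxP, hxg⟩ := findx (Finset.Icc (2 ^ s + 1) (2 ^ (s+1)))
        (by rw [Nat.card_Icc]; omega)
      rw [Finset.mem_Icc] at hxP
      have hxC : x ∈ C := by
        rw [hCeq]
        intro i
        rcases hF i with ⟨a, ha⟩ | ⟨u, hu⟩
        · rw [← ha, hp' i a ha.symm]
          have hgi : a = g i := hg i a ha.symm
          have := hxg i
          simp only [p, decide_eq_false_iff_not]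
          omega
        · rcases (Bool.eq_false_or_eq_true (δ i)).symm with hd | hd
          · have hu2 := hFa i u hu.symm hd
            rw [← hu, hd]
            simp only [l2, decide_eq_false_iff_not, Nat.not_lt]
            have : (2:ℕ) ^ (s+2) ≤ 2 ^ u := Nat.pow_le_pow_right (by norm_num) hu2
            omega
          · have hu1 := hT i u hu.symm hd
            have hu1' : u ≠ s + 1 := by
              intro h
              exact hA i (by rw [← hu, h]) hd
            rw [← hu, hd]
            simp only [l2, decide_eq_true_eq]
            have : (2:ℕ) ^ u ≤ 2 ^ s := Nat.pow_le_pow_right (by norm_num) (by omega)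
            omega
      have := hsub hxC
      rw [Set.mem_Icc] at this
      omega

theorem stmt_12 (m t : ℕ) (hm : 1 ≤ m) :
    (∃ r : ℕ, ∃ B : Set ℕ, t < 2 ^ r - m + 1 ∧ Definable F (m + 3) B ∧
      B.ncard = 2 ^ r - m + 1 ∧
      (∀ C : Set ℕ, Definable F m C → C ⊆ B → ∃ a : ℕ, C = {a})) ∧
    ¬ (∀ B : Set ℕ, Definable F (m + 1) B → UnionOfAtMost F m t B) := by
  set s : ℕ := m + t + 1 with hs
  have hlt : m + t < 2 ^ (m + t) := Nat.lt_two_pow_self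
  have hpows : (2:ℕ) ^ s = 2 * 2 ^ (m + t) := by rw [hs]; ring
  have hpow1 : (2:ℕ) ^ (s+1) = 4 * 2 ^ (m + t) := by rw [hs]; ring
  have hms : m < 2 ^ s := by omega
  have hms' : m ≤ 2 ^ (s+1) := by omega
  have hBcard : (Set.Icc (2 ^ (s+1) + m) (2 ^ (s+2))).ncard = 2 ^ (s+1) - m + 1 := by
    rw [← Finset.coe_Icc, Set.ncard_coe_finset, Nat.card_Icc]
    have hpow2 : (2:ℕ) ^ (s+2) = 8 * 2 ^ (m + t) := by rw [hs]; ring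
    omega
  constructor
  · refine ⟨s + 1, Set.Icc (2 ^ (s+1) + m) (2 ^ (s+2)), by omega, ?_, hBcard, ?_⟩
    · exact defB m s 2 hm hms'
    · exact fun C hC hsub => key m s hm hms C hC hsub
  · intro h
    obtain ⟨k, hk, D, hD, hU⟩ := h _ (defB m s 0 hm hms')
    have hsing : ∀ i : Fin k, ∃ a : ℕ, D i = {a} := by
      intro i
      refine key m s hm hms (D i) (hD i) ?_
      rw [hU]
      exact Set.subset_iUnion D i
    choose a ha using hsing
    have hrange : Set.Icc (2 ^ (s+1) + m) (2 ^ (s+2)) = Set.range a := by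
      rw [hU]
      ext x
      simp only [Set.mem_iUnion, Set.mem_range]
      constructor
      · rintro ⟨i, hx⟩; rw [ha i] at hx; exact ⟨i, hx.symm⟩
      · rintro ⟨i, rfl⟩; exact ⟨i, by rw [ha i]; rfl⟩
    have hle : (Set.range a).ncard ≤ k := by
      have : Set.range a = ↑(Finset.image a Finset.univ) := by
        ext x; simp
      rw [this, Set.ncard_coe_finset]
      calc (Finset.image a Finset.univ).card ≤ (Finset.univ : Finset (Fin k)).card :=
            Finset.card_image_le
        _ = k := by rw [Finset.card_univ, Fintype.card_fin]
    rw [← hrange, hBcard] at hle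
    omega
end
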